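/- Let P be an n×2 and Q an n×m joint probability matrix in standard form with p = p₁ ∈ (0,1). Suppose p^{|2} ≺ p^{|1} (majorization) and q^{|w} ≺ p^{|1} for all w. Then Q ≺_c P if and only if p ≥ Σ_{w=1}^m q_w max{0, h_w}, where h_w = max_{k: μ_k > 0} ν_k^{(w)}/μ_k, with μ_k = Σ_{x=1}^k (p_{x|1} − p_{x|2}) and ν_k^{(w)} = Σ_{x=1}^k (q_{x|w} − p_{x|2}). -/

import Mathlib

open Matrix Finset

/-- Row-stochastic matrix: nonnegative entries, each row sums to 1. -/
def RowStoch {ℓ m : ℕ} (T : Matrix (Fin ℓ) (Fin m) ℝ) : Prop :=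
  (∀ y w, 0 ≤ T y w) ∧ ∀ y, ∑ w, T y w = 1

/-- Doubly stochastic matrix. -/
def DStoch {n : ℕ} (D : Matrix (Fin n) (Fin n) ℝ) : Prop :=
  (∀ i j, 0 ≤ D i j) ∧ (∀ i, ∑ j, D i j = 1) ∧ (∀ j, ∑ i, D i j = 1)

/-- Conditional majorization `P ≻_c Q` via classical-conditioned random relabelings:
`Q = ∑ j, D j * P * R j` with each `D j` doubly stochastic, each `R j` entrywise
nonnegative, and `∑ j, R j` row-stochastic. -/
def CondMaj {n ℓ m : ℕ} (P : Matrix (Fin n) (Fin ℓ) ℝ)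
    (Q : Matrix (Fin n) (Fin m) ℝ) : Prop :=
  ∃ (J : ℕ) (D : Fin J → Matrix (Fin n) (Fin n) ℝ)
    (R : Fin J → Matrix (Fin ℓ) (Fin m) ℝ),
    (∀ j, DStoch (D j)) ∧ (∀ j y w, 0 ≤ R j y w) ∧
    RowStoch (∑ j, R j) ∧ Q = ∑ j, D j * P * R j

/-- Joint probability matrix: nonnegative entries summing to one. -/
def JointProb {n ℓ : ℕ} (P : Matrix (Fin n) (Fin ℓ) ℝ) : Prop :=
  (∀ x y, 0 ≤ P x y) ∧ ∑ x, ∑ y, P x y = 1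

/-- Column sum (marginal). -/
noncomputable def ColSum {n m : ℕ} (Q : Matrix (Fin n) (Fin m) ℝ) (w : Fin m) : ℝ :=
  ∑ x, Q x w
/-- Partial column sum of the first `k` entries of column `w`. -/
noncomputable def PartSum {n m : ℕ} (Q : Matrix (Fin n) (Fin m) ℝ) (k : ℕ) (w : Fin m) : ℝ :=
  ∑ x ∈ Finset.univ.filter (fun x : Fin n => (x : ℕ) < k), Q x w

/-- Standard form: columns sorted nonincreasingly, no zero columns, no column a
nonnegative multiple of another, and columns ordered by nonincreasing column sums,
ties broken lexicographically by nonincreasing partial sums. -/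
def StdForm {n m : ℕ} (Q : Matrix (Fin n) (Fin m) ℝ) : Prop :=
  (∀ w, ∀ x x' : Fin n, x ≤ x' → Q x' w ≤ Q x w) ∧
  (∀ w, ∃ x, Q x w ≠ 0) ∧
  (∀ w w' : Fin m, w ≠ w' → ∀ c : ℝ, 0 ≤ c → ¬ (∀ x, Q x w = c * Q x w')) ∧
  (∀ w w' : Fin m, w < w' →
    ColSum Q w' < ColSum Q w ∨
    (ColSum Q w' = ColSum Q w ∧ ∃ k : ℕ,
      (∀ j < k, PartSum Q j w = PartSum Q j w') ∧ PartSum Q k w' < PartSum Q k w))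
/-- `μ_k = ∑_{x ≤ k} (p_{x|1} - p_{x|2})`. -/
noncomputable def muP {n : ℕ} (P : Matrix (Fin n) (Fin 2) ℝ) (k : Fin n) : ℝ :=
  ∑ x ∈ Finset.univ.filter (fun x => x ≤ k), (P x 0 / ColSum P 0 - P x 1 / ColSum P 1)

/-- `ν_k^{(w)} = ∑_{x ≤ k} (q_{x|w} - p_{x|2})`. -/
noncomputable def nuPQ {n m : ℕ} (P : Matrix (Fin n) (Fin 2) ℝ)
    (Q : Matrix (Fin n) (Fin m) ℝ) (w : Fin m) (k : Fin n) : ℝ :=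
  ∑ x ∈ Finset.univ.filter (fun x => x ≤ k), (Q x w / ColSum Q w - P x 1 / ColSum P 1)
/-- Nonincreasing rearrangement of a vector. -/
noncomputable def sortDesc {n : ℕ} (u : Fin n → ℝ) : Fin n → ℝ :=
  fun i => u (Tuple.sort (fun j => -u j) i)

/-- Sum of the `k` largest entries of `u`. -/
noncomputable def pSumDesc {n : ℕ} (u : Fin n → ℝ) (k : ℕ) : ℝ :=
  ∑ i ∈ Finset.univ.filter (fun i : Fin n => (i : ℕ) < k), sortDesc u i

/-- `Majorizes u v` means `u ≻ v`: all partial sums of the sorted `u` dominate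
those of `v`, and the total sums coincide. -/
def Majorizes {n : ℕ} (u v : Fin n → ℝ) : Prop :=
  (∀ k : ℕ, pSumDesc v k ≤ pSumDesc u k) ∧ ∑ i, u i = ∑ i, v i

noncomputable def ps {n : ℕ} (u : Fin n → ℝ) (k : ℕ) : ℝ :=
  ∑ i ∈ Finset.univ.filter (fun i : Fin n => (i : ℕ) < k), u i

lemma card_filter_lt (n k : ℕ) :
    (Finset.univ.filter (fun i : Fin n => (i:ℕ) < k)).card = min k n := by
  rcases le_total k n with h | h
  · have h2 := Fintype.card_fin_lt_of_le (n := n) h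
    rw [Fintype.card_subtype] at h2
    rw [min_eq_left h]; exact h2
  · rw [min_eq_right h, Finset.filter_true_of_mem (fun i _ => lt_of_lt_of_le i.isLt h)]
    simp

lemma ps_min {n : ℕ} (u : Fin n → ℝ) (k : ℕ) : ps u (min k n) = ps u k := by
  unfold ps
  congr 1
  apply Finset.filter_congr
  intro i _
  have := i.isLt
  constructor <;> intro <;> omega

lemma ps_of_le {n : ℕ} (u : Fin n → ℝ) {k : ℕ} (h : n ≤ k) : ps u k = ps u n := by
  rw [← ps_min u k, min_eq_right h, ← ps_min u n, min_self]

lemma ps_univ {n : ℕ} (u : Fin n → ℝ) : ps u n = ∑ i, u i := by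
  unfold ps
  rw [Finset.filter_true_of_mem (fun i _ => i.isLt)]

lemma sortDesc_antitone {n : ℕ} (u : Fin n → ℝ) : Antitone (sortDesc u) := by
  intro a b hab
  have h := Tuple.monotone_sort (fun j => -u j) hab
  simp only [Function.comp_apply] at h
  exact neg_le_neg_iff.mp h

lemma sortDesc_eq_self {n : ℕ} {u : Fin n → ℝ} (hu : Antitone u) : sortDesc u = u := by
  have hm : Monotone (fun j => -u j) := fun a b hab => neg_le_neg (hu hab)
  funext i
  unfold sortDesc
  rw [Tuple.sort_eq_refl_iff_monotone.mpr hm]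
  rfl

lemma pSumDesc_eq_ps {n : ℕ} {u : Fin n → ℝ} (hu : Antitone u) (k : ℕ) :
    pSumDesc u k = ps u k := by
  unfold pSumDesc ps
  rw [sortDesc_eq_self hu]

lemma pSumDesc_eq_ps_sortDesc {n : ℕ} (u : Fin n → ℝ) (k : ℕ) :
    pSumDesc u k = ps (sortDesc u) k := rfl

lemma weighted_le_ps {n : ℕ} (u w : Fin n → ℝ) (k : ℕ) (hu : Antitone u)
    (h0 : ∀ i, 0 ≤ w i) (h1 : ∀ i, w i ≤ 1) (hs : ∑ i, w i = ((min k n : ℕ) : ℝ)) :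
    ∑ i, w i * u i ≤ ps u (min k n) := by
  set k' := min k n with hk'
  rcases Nat.eq_zero_or_pos k' with h0' | hpos
  · have hs0 : ∑ i, w i = 0 := by rw [hs, h0']; norm_num
    have hw : ∀ i ∈ Finset.univ, w i = 0 :=
      (Finset.sum_eq_zero_iff_of_nonneg (fun i _ => h0 i)).mp hs0
    rw [h0']
    have : ∑ i, w i * u i = 0 := Finset.sum_eq_zero (fun i hi => by rw [hw i hi, zero_mul])
    rw [this]
    unfold ps
    rw [Finset.filter_false_of_mem (by intro i _; omega), Finset.sum_empty]
  · have hkn : k' ≤ n := min_le_right _ _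
    set j0 : Fin n := ⟨k' - 1, by omega⟩ with hj0
    set θ := u j0 with hθ
    have step1 : ∑ i, w i * u i = (∑ i, w i * (u i - θ)) + θ * ∑ i, w i := by
      rw [Finset.mul_sum, ← Finset.sum_add_distrib]
      apply Finset.sum_congr rfl
      intro i _; ring
    have step2 : ∑ i, w i * (u i - θ) ≤ ∑ i, max 0 (u i - θ) := by
      apply Finset.sum_le_sum
      intro i _
      rcases le_total θ (u i) with h | h
      · calc w i * (u i - θ) ≤ 1 * (u i - θ) :=
              mul_le_mul_of_nonneg_right (h1 i) (by linarith)
          _ = u i - θ := one_mul _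
          _ ≤ max 0 (u i - θ) := le_max_right _ _
      · calc w i * (u i - θ) ≤ 0 := mul_nonpos_of_nonneg_of_nonpos (h0 i) (by linarith)
          _ ≤ max 0 (u i - θ) := le_max_left _ _
    have step3 : ∑ i, max 0 (u i - θ) = ps u k' - θ * k' := by
      rw [← Finset.sum_filter_add_sum_filter_not Finset.univ (fun i : Fin n => (i:ℕ) < k')]
      have e1 : ∑ i ∈ Finset.univ.filter (fun i : Fin n => (i:ℕ) < k'), max 0 (u i - θ)
          = ∑ i ∈ Finset.univ.filter (fun i : Fin n => (i:ℕ) < k'), (u i - θ) := by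
        apply Finset.sum_congr rfl
        intro i hi
        simp only [Finset.mem_filter] at hi
        have : i ≤ j0 := by
          rw [Fin.le_def]; simp only [hj0]; omega
        have := hu this
        rw [max_eq_right (by linarith)]
      have e2 : ∑ i ∈ Finset.univ.filter (fun i : Fin n => ¬ (i:ℕ) < k'), max 0 (u i - θ) = 0 := by
        apply Finset.sum_eq_zero
        intro i hi
        simp only [Finset.mem_filter] at hi
        have : j0 ≤ i := by
          rw [Fin.le_def]; simp only [hj0]; omega
        have := hu this
        rw [max_eq_left (by linarith)]
      rw [e1, e2, add_zero, Finset.sum_sub_distrib]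
      unfold ps
      rw [Finset.sum_const, card_filter_lt, min_eq_left hkn, nsmul_eq_mul]
      ring
    rw [step1, hs]
    calc (∑ i, w i * (u i - θ)) + θ * k' ≤ (ps u k' - θ * k') + θ * k' := by
          have := le_trans step2 (le_of_eq step3); linarith
      _ = ps u k' := by ring

lemma weighted_le_pSumDesc {n : ℕ} (u w : Fin n → ℝ) (k : ℕ)
    (h0 : ∀ i, 0 ≤ w i) (h1 : ∀ i, w i ≤ 1) (hs : ∑ i, w i = ((min k n : ℕ) : ℝ)) :
    ∑ i, w i * u i ≤ pSumDesc u k := by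
  set σ := Tuple.sort (fun j => -u j) with hσ
  have e : ∑ i, w i * u i = ∑ i, (w (σ i)) * (sortDesc u i) :=
    (Equiv.sum_comp σ (fun i => w i * u i)).symm
  rw [e, pSumDesc_eq_ps_sortDesc, ← ps_min]
  exact weighted_le_ps (sortDesc u) (fun i => w (σ i)) k (sortDesc_antitone u)
    (fun i => h0 _) (fun i => h1 _) (by rw [Equiv.sum_comp σ w]; exact hs)

lemma pSumDesc_eq_sum_subset {n : ℕ} (u : Fin n → ℝ) (k : ℕ) :
    ∃ s : Finset (Fin n), s.card = min k n ∧ pSumDesc u k = ∑ i ∈ s, u i := by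
  refine ⟨(Finset.univ.filter fun i : Fin n => (i:ℕ) < k).image (Tuple.sort (fun j => -u j)),
    ?_, ?_⟩
  · rw [Finset.card_image_of_injective _ (Equiv.injective _), card_filter_lt]
  · rw [Finset.sum_image (fun a _ b _ h => (Equiv.injective _) h)]
    rfl

lemma sum_subset_le_pSumDesc {n : ℕ} (u : Fin n → ℝ) (k : ℕ) (s : Finset (Fin n))
    (hs : s.card = min k n) : ∑ i ∈ s, u i ≤ pSumDesc u k := by
  have h := weighted_le_pSumDesc u (fun i => if i ∈ s then (1:ℝ) else 0) k
    (fun i => by positivity) (fun i => by split <;> norm_num)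
    (by rw [Finset.sum_boole, Finset.filter_mem_eq_inter, Finset.univ_inter, hs])
  calc ∑ i ∈ s, u i = ∑ i, (if i ∈ s then (1:ℝ) else 0) * u i := by
        simp only [ite_mul, one_mul, zero_mul, ← Finset.sum_filter,
          Finset.filter_mem_eq_inter, Finset.univ_inter]
    _ ≤ pSumDesc u k := h

lemma pSumDesc_zero {n : ℕ} (k : ℕ) : pSumDesc (0 : Fin n → ℝ) k = 0 := by
  unfold pSumDesc sortDesc
  simp

lemma pSumDesc_add_le {n : ℕ} (u v : Fin n → ℝ) (k : ℕ) :
    pSumDesc (u + v) k ≤ pSumDesc u k + pSumDesc v k := by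
  obtain ⟨s, hc, he⟩ := pSumDesc_eq_sum_subset (u + v) k
  rw [he]
  have : ∑ i ∈ s, (u + v) i = ∑ i ∈ s, u i + ∑ i ∈ s, v i := by
    rw [← Finset.sum_add_distrib]; rfl
  rw [this]
  exact add_le_add (sum_subset_le_pSumDesc u k s hc) (sum_subset_le_pSumDesc v k s hc)

lemma pSumDesc_sum_le {n : ℕ} {ι : Type*} (s : Finset ι) (f : ι → (Fin n → ℝ)) (k : ℕ) :
    pSumDesc (∑ j ∈ s, f j) k ≤ ∑ j ∈ s, pSumDesc (f j) k := by
  induction s using Finset.cons_induction with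
  | empty => simp [pSumDesc_zero]
  | cons a s ha ih =>
    rw [Finset.sum_cons, Finset.sum_cons]
    exact le_trans (pSumDesc_add_le _ _ _) (by linarith)

lemma pSumDesc_mulVec_le {n : ℕ} {D : Matrix (Fin n) (Fin n) ℝ} (hD : DStoch D)
    (z : Fin n → ℝ) (k : ℕ) : pSumDesc (D.mulVec z) k ≤ pSumDesc z k := by
  obtain ⟨s, hc, he⟩ := pSumDesc_eq_sum_subset (D.mulVec z) k
  rw [he]
  have e : ∑ i ∈ s, D.mulVec z i = ∑ j, (∑ i ∈ s, D i j) * z j := by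
    unfold Matrix.mulVec dotProduct
    rw [Finset.sum_comm]
    exact Finset.sum_congr rfl (fun j _ => by rw [Finset.sum_mul])
  rw [e]
  apply weighted_le_pSumDesc
  · exact fun j => Finset.sum_nonneg (fun i _ => hD.1 i j)
  · intro j
    calc ∑ i ∈ s, D i j ≤ ∑ i, D i j :=
          Finset.sum_le_sum_of_subset_of_nonneg (Finset.subset_univ s)
            (fun i _ _ => hD.1 i j)
      _ = 1 := hD.2.2 j
  · rw [Finset.sum_comm]
    have : ∀ i ∈ s, ∑ j, D i j = 1 := fun i _ => hD.2.1 i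
    rw [Finset.sum_congr rfl this, Finset.sum_const, hc, nsmul_eq_mul, mul_one]

lemma DStoch.one {n : ℕ} : DStoch (1 : Matrix (Fin n) (Fin n) ℝ) := by
  refine ⟨fun i j => ?_, fun i => ?_, fun j => ?_⟩
  · by_cases h : i = j <;> simp [Matrix.one_apply, h]
  · simp [Matrix.one_apply]
  · simp [Matrix.one_apply, Finset.sum_ite_eq]

lemma DStoch.mul {n : ℕ} {A B : Matrix (Fin n) (Fin n) ℝ} (hA : DStoch A) (hB : DStoch B) :
    DStoch (A * B) := by
  refine ⟨fun i j => ?_, fun i => ?_, fun j => ?_⟩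
  · rw [Matrix.mul_apply]
    exact Finset.sum_nonneg (fun l _ => mul_nonneg (hA.1 i l) (hB.1 l j))
  · rw [show ∑ j, (A * B) i j = ∑ l, A i l * ∑ j, B l j by
      simp [Matrix.mul_apply, Finset.mul_sum]; rw [Finset.sum_comm]]
    simp only [hB.2.1, mul_one]
    exact hA.2.1 i
  · rw [show ∑ i, (A * B) i j = ∑ l, (∑ i, A i l) * B l j by
      simp [Matrix.mul_apply, Finset.sum_mul]; rw [Finset.sum_comm]]
    simp only [hA.2.2, one_mul]
    exact hB.2.2 j

section HLP
variable {n : ℕ}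

lemma ps_succ (u : Fin n → ℝ) (k : Fin n) : ps u ((k:ℕ) + 1) = ps u (k:ℕ) + u k := by
  unfold ps
  have : Finset.univ.filter (fun i : Fin n => (i:ℕ) < (k:ℕ) + 1)
      = insert k (Finset.univ.filter (fun i : Fin n => (i:ℕ) < (k:ℕ))) := by
    ext i
    simp only [Finset.mem_filter, Finset.mem_univ, true_and, Finset.mem_insert]
    constructor
    · intro h
      rcases Nat.lt_succ_iff_lt_or_eq.mp h with h | h
      · exact Or.inr h
      · exact Or.inl (Fin.ext h)
    · rintro (rfl | h)
      · omega
      · omega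
  rw [this, Finset.sum_insert (by simp)]
  ring

lemma ps_split (f : Fin n → ℝ) {a b : ℕ} (hab : a ≤ b) :
    ps f b = ps f a + ∑ i ∈ Finset.univ.filter (fun i : Fin n => a ≤ (i:ℕ) ∧ (i:ℕ) < b), f i := by
  unfold ps
  rw [← Finset.sum_filter_add_sum_filter_not
    (Finset.univ.filter (fun i : Fin n => (i:ℕ) < b)) (fun i => (i:ℕ) < a) f]
  congr 1
  · congr 1
    rw [Finset.filter_filter]
    apply Finset.filter_congr
    intro i _
    constructor
    · intro h; omega
    · intro h; omega
  · congr 1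
    rw [Finset.filter_filter]
    apply Finset.filter_congr
    intro i _
    constructor
    · intro h; push_neg at h; omega
    · intro h; constructor
      · omega
      · omega

lemma ps_update (f : Fin n → ℝ) (x : Fin n) (c : ℝ) (l : ℕ) :
    ps (Function.update f x c) l = ps f l + (if (x:ℕ) < l then c - f x else 0) := by
  unfold ps
  by_cases hx : (x:ℕ) < l
  · have hmem : x ∈ Finset.univ.filter (fun i : Fin n => (i:ℕ) < l) := by
      simp [hx]
    rw [Finset.sum_update_of_mem hmem, if_pos hx]
    rw [← Finset.add_sum_erase _ f hmem]
    rw [Finset.sdiff_singleton_eq_erase]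
    ring
  · rw [if_neg hx, add_zero]
    apply Finset.sum_congr rfl
    intro i hi
    rw [Function.update_of_ne]
    rintro rfl
    exact hx (Finset.mem_filter.mp hi).2

/-- Permutation matrix. -/
def permMat (σ : Equiv.Perm (Fin n)) : Matrix (Fin n) (Fin n) ℝ :=
  Matrix.of fun i i' => if σ i = i' then 1 else 0

lemma permMat_dstoch (σ : Equiv.Perm (Fin n)) : DStoch (permMat σ) := by
  refine ⟨fun i j => ?_, fun i => ?_, fun j => ?_⟩
  · unfold permMat; dsimp; split <;> norm_num
  · unfold permMat; simp
  · unfold permMat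
    simp only [Matrix.of_apply]
    rw [Finset.sum_eq_single (σ.symm j)]
    · simp
    · intro i _ hne
      rw [if_neg]
      intro h
      exact hne (by rw [← h]; simp)
    · simp

lemma permMat_mulVec (σ : Equiv.Perm (Fin n)) (v : Fin n → ℝ) :
    (permMat σ).mulVec v = fun i => v (σ i) := by
  funext i
  unfold permMat Matrix.mulVec dotProduct
  simp only [Matrix.of_apply]
  rw [Finset.sum_eq_single (σ i)]
  · simp
  · intro i' _ hne
    rw [if_neg (fun h => hne h.symm), zero_mul]
  · simp

lemma DStoch.convex {A B : Matrix (Fin n) (Fin n) ℝ} (hA : DStoch A) (hB : DStoch B)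
    {t : ℝ} (ht0 : 0 ≤ t) (ht1 : t ≤ 1) : DStoch (t • A + (1 - t) • B) := by
  refine ⟨fun i j => ?_, fun i => ?_, fun j => ?_⟩
  · simp only [Matrix.add_apply, Matrix.smul_apply, smul_eq_mul]
    have := hA.1 i j; have := hB.1 i j
    nlinarith
  · simp only [Matrix.add_apply, Matrix.smul_apply, smul_eq_mul, Finset.sum_add_distrib,
      ← Finset.mul_sum, hA.2.1 i, hB.2.1 i]
    ring
  · simp only [Matrix.add_apply, Matrix.smul_apply, smul_eq_mul, Finset.sum_add_distrib,
      ← Finset.mul_sum, hA.2.2 j, hB.2.2 j]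
    ring

theorem hlp_aux : ∀ (N : ℕ) (u v : Fin n → ℝ),
    (Finset.univ.filter (fun i => u i ≠ v i)).card ≤ N →
    Antitone u → Antitone v → (∀ k : ℕ, ps u k ≤ ps v k) → (∑ i, u i = ∑ i, v i) →
    ∃ D, DStoch D ∧ u = D.mulVec v := by
  intro N
  induction N with
  | zero =>
    intro u v hcard hu hv hle heq
    have huv : u = v := by
      funext i
      by_contra hne
      have : i ∈ Finset.univ.filter (fun i => u i ≠ v i) := by simp [hne]
      have := Finset.card_pos.mpr ⟨i, this⟩
      omega
    exact ⟨1, DStoch.one, by rw [huv, Matrix.one_mulVec]⟩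
  | succ N ih =>
    intro u v hcard hu hv hle heq
    by_cases huv : u = v
    · exact ⟨1, DStoch.one, by rw [huv, Matrix.one_mulVec]⟩
    -- there is an index where v < u
    have hex : ∃ i, v i < u i := by
      by_contra hall
      push_neg at hall
      obtain ⟨i0, hi0⟩ : ∃ i, u i ≠ v i := by
        by_contra hc
        push_neg at hc
        exact huv (funext hc)
      have : ∑ i, u i < ∑ i, v i :=
        Finset.sum_lt_sum (fun i _ => hall i) ⟨i0, Finset.mem_univ _,
          lt_of_le_of_ne (hall i0) hi0⟩
      linarith
    set S := Finset.univ.filter (fun i => v i < u i) with hSdef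
    have hS : S.Nonempty := ⟨hex.choose, by simp [hSdef, hex.choose_spec]⟩
    set k := S.min' hS with hkdef
    have hk : v k < u k := (Finset.mem_filter.mp (S.min'_mem hS)).2
    have hkmin : ∀ i : Fin n, i < k → u i ≤ v i := by
      intro i hik
      by_contra hc
      push_neg at hc
      exact absurd (S.min'_le i (by simp [hSdef, hc])) (not_le.mpr hik)
    -- there is j < k with u j < v j
    have hexj : ∃ j : Fin n, (j:ℕ) < (k:ℕ) ∧ u j < v j := by
      have h1 : ps u ((k:ℕ)+1) ≤ ps v ((k:ℕ)+1) := hle _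
      rw [ps_succ, ps_succ] at h1
      have h2 : ps u (k:ℕ) < ps v (k:ℕ) := by linarith
      unfold ps at h2
      obtain ⟨j, hjmem, hj⟩ := Finset.exists_lt_of_sum_lt h2
      exact ⟨j, (Finset.mem_filter.mp hjmem).2, hj⟩
    set T := Finset.univ.filter (fun i : Fin n => (i:ℕ) < (k:ℕ) ∧ u i < v i) with hTdef
    have hT : T.Nonempty := by
      obtain ⟨j0, hj0k, hj0⟩ := hexj
      exact ⟨j0, by
        simp only [hTdef, Finset.mem_filter, Finset.mem_univ, true_and]
        exact ⟨hj0k, hj0⟩⟩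
    set j := T.max' hT with hjdef
    obtain ⟨hjk, hj⟩ : (j:ℕ) < (k:ℕ) ∧ u j < v j := (Finset.mem_filter.mp (T.max'_mem hT)).2
    have hjkf : j < k := by rw [Fin.lt_def]; exact hjk
    have hjne : j ≠ k := ne_of_lt hjkf
    have hinterior : ∀ i : Fin n, j < i → (i:ℕ) < (k:ℕ) → u i = v i := by
      intro i hji hik
      have h1 : u i ≤ v i := hkmin i hik
      rcases lt_or_eq_of_le h1 with h | h
      · refine absurd (Finset.le_max' T i ?_) (not_le.mpr hji)
        simp only [hTdef, Finset.mem_filter, Finset.mem_univ, true_and]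
        exact ⟨hik, h⟩
      · exact h
    set a := v j - u j with hadef
    set b := u k - v k with hbdef
    have ha : 0 < a := by simp [hadef]; linarith
    have hb : 0 < b := by simp [hbdef]; linarith
    set δ := min a b with hδdef
    have hδ : 0 < δ := lt_min ha hb
    have hδa : δ ≤ a := min_le_left _ _
    have hδb : δ ≤ b := min_le_right _ _
    have hujk : u k ≤ u j := hu (le_of_lt hjkf)
    set g := v j - v k with hgdef
    have hg : 0 < g := by simp [hgdef]; linarith
    have hδg : δ ≤ g := by
      have : a ≤ g := by simp [hadef, hgdef]; linarith
      linarith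
    set t : ℝ := 1 - δ / g with htdef
    have ht0 : 0 ≤ t := by
      rw [htdef]
      have : δ / g ≤ 1 := (div_le_one hg).mpr hδg
      linarith
    have ht1 : t ≤ 1 := by
      rw [htdef]
      have : 0 ≤ δ / g := le_of_lt (div_pos hδ hg)
      linarith
    set Tm : Matrix (Fin n) (Fin n) ℝ := t • 1 + (1 - t) • permMat (Equiv.swap j k) with hTmdef
    have hTm : DStoch Tm := DStoch.convex DStoch.one (permMat_dstoch _) ht0 ht1
    set v' := Function.update (Function.update v j (v j - δ)) k (v k + δ) with hv'def
    have hv'j : v' j = v j - δ := by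
      rw [hv'def, Function.update_of_ne hjne, Function.update_self]
    have hv'k : v' k = v k + δ := by rw [hv'def, Function.update_self]
    have hv'other : ∀ i, i ≠ j → i ≠ k → v' i = v i := by
      intro i hij hik
      rw [hv'def, Function.update_of_ne hik, Function.update_of_ne hij]
    -- v' = Tm.mulVec v
    have hTmv : v' = Tm.mulVec v := by
      funext i
      rw [hTmdef, Matrix.add_mulVec, Matrix.smul_mulVec, Matrix.smul_mulVec,
        Matrix.one_mulVec, permMat_mulVec]
      simp only [Pi.add_apply, Pi.smul_apply, smul_eq_mul]
      rcases eq_or_ne i j with rfl | hij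
      · rw [hv'j, Equiv.swap_apply_left, htdef]
        field_simp
        ring
      rcases eq_or_ne i k with rfl | hik
      · rw [hv'k, Equiv.swap_apply_right, htdef]
        field_simp
        ring
      · rw [hv'other i hij hik, Equiv.swap_apply_of_ne_of_ne hij hik]
        ring
    -- bounds for v'
    have hb1 : u j ≤ v' j := by rw [hv'j]; simp [hadef] at hδa; linarith
    have hb2 : v' j ≤ v j := by rw [hv'j]; linarith
    have hb3 : v' k ≤ u k := by rw [hv'k]; simp [hbdef] at hδb; linarith
    have hb4 : v k ≤ v' k := by rw [hv'k]; linarith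
    -- antitone v'
    have hv' : Antitone v' := by
      intro x y hxy
      rcases eq_or_lt_of_le hxy with rfl | hxy
      · exact le_rfl
      rcases eq_or_ne y j with rfl | hyj
      · -- x < j
        have hxj : x ≠ j := ne_of_lt hxy
        have hxk : x ≠ k := ne_of_lt (lt_trans hxy hjkf)
        rw [hv'other x hxj hxk]
        calc v' j ≤ v j := hb2
          _ ≤ v x := hv (le_of_lt hxy)
      rcases eq_or_ne y k with rfl | hyk
      · rcases eq_or_ne x j with rfl | hxj
        · calc v' k ≤ u k := hb3
            _ ≤ u j := hujk
            _ ≤ v' j := hb1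
        · have hxk : x ≠ k := ne_of_lt hxy
          rw [hv'other x hxj hxk]
          rcases lt_or_ge x j with h | h
          · calc v' k ≤ u k := hb3
              _ ≤ u j := hujk
              _ ≤ v j := le_of_lt hj
              _ ≤ v x := hv (le_of_lt h)
          · have hjx : j < x := lt_of_le_of_ne h (Ne.symm hxj)
            have : u x = v x := hinterior x hjx hxy
            calc v' k ≤ u k := hb3
              _ ≤ u x := hu (le_of_lt hxy)
              _ = v x := this
      · -- y ∉ {j, k}
        rw [hv'other y hyj hyk]
        rcases eq_or_ne x j with rfl | hxj
        · rcases lt_or_ge (y:ℕ) (k:ℕ) with h | h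
          · have : u y = v y := hinterior y hxy h
            calc v y = u y := this.symm
              _ ≤ u j := hu (le_of_lt hxy)
              _ ≤ v' j := hb1
          · have hky : k < y := by
              rcases lt_or_eq_of_le h with h' | h'
              · exact h'
              · exact absurd (Fin.ext h'.symm) hyk
            calc v y ≤ v k := hv (le_of_lt hky)
              _ ≤ v' k := hb4
              _ ≤ u k := hb3
              _ ≤ u j := hujk
              _ ≤ v' j := hb1
        rcases eq_or_ne x k with rfl | hxk
        · calc v y ≤ v k := hv (le_of_lt hxy)
            _ ≤ v' k := hb4
        · rw [hv'other x hxj hxk]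
          exact hv (le_of_lt hxy)
    -- ps u ≤ ps v'
    have hle' : ∀ l : ℕ, ps u l ≤ ps v' l := by
      intro l
      have hps : ps v' l = ps v l + (if (j:ℕ) < l then (v j - δ) - v j else 0)
          + (if (k:ℕ) < l then δ else 0) := by
        rw [hv'def, ps_update, ps_update]
        rw [Function.update_of_ne (Ne.symm hjne)]
        have : v k + δ - v k = δ := by ring
        rw [this]
      rcases le_or_gt l (j:ℕ) with h | hjl
      · rw [hps, if_neg (by omega), if_neg (by omega)]
        have := hle l
        linarith
      rcases le_or_gt l (k:ℕ) with hlk | hkl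
      · rw [hps, if_pos hjl, if_neg (by omega)]
        have hsplit_v := ps_split v (show (j:ℕ)+1 ≤ l by omega)
        have hsplit_u := ps_split u (show (j:ℕ)+1 ≤ l by omega)
        have hmid : ∑ i ∈ Finset.univ.filter (fun i : Fin n => (j:ℕ)+1 ≤ (i:ℕ) ∧ (i:ℕ) < l), v i
            = ∑ i ∈ Finset.univ.filter (fun i : Fin n => (j:ℕ)+1 ≤ (i:ℕ) ∧ (i:ℕ) < l), u i := by
          apply Finset.sum_congr rfl
          intro i hi
          obtain ⟨h1, h2⟩ := (Finset.mem_filter.mp hi).2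
          exact (hinterior i (by rw [Fin.lt_def]; omega) (by omega)).symm
        have hjsv := ps_succ v j
        have hjsu := ps_succ u j
        have hlej := hle (j:ℕ)
        simp [hadef] at hδa
        linarith
      · rw [hps, if_pos (by omega), if_pos hkl]
        have := hle l
        linarith
    -- sum equality
    have heq' : ∑ i, u i = ∑ i, v' i := by
      rw [← ps_univ, ← ps_univ]
      have hps : ps v' n = ps v n + (if (j:ℕ) < n then (v j - δ) - v j else 0)
          + (if (k:ℕ) < n then δ else 0) := by
        rw [hv'def, ps_update, ps_update]
        rw [Function.update_of_ne (Ne.symm hjne)]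
        have : v k + δ - v k = δ := by ring
        rw [this]
      rw [hps, if_pos j.isLt, if_pos k.isLt, ps_univ, ps_univ]
      linarith [heq]
    -- card decreases
    have hsub : Finset.univ.filter (fun i => u i ≠ v' i)
        ⊂ Finset.univ.filter (fun i => u i ≠ v i) := by
      constructor
      · intro i hi
        simp only [Finset.mem_filter, Finset.mem_univ, true_and] at hi ⊢
        rcases eq_or_ne i j with rfl | hij
        · exact ne_of_lt hj
        rcases eq_or_ne i k with rfl | hik
        · exact (ne_of_lt hk).symm
        · rw [← hv'other i hij hik]; exact hi
      · intro hsub'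
        rcases min_choice a b with hmin | hmin
        · have : u j = v' j := by rw [hv'j, hδdef, hmin, hadef]; ring
          have hjin : j ∈ Finset.univ.filter (fun i => u i ≠ v i) := by
            simp [ne_of_lt hj]
          have := hsub' hjin
          simp only [Finset.mem_filter, Finset.mem_univ, true_and] at this
          exact this ‹u j = v' j›
        · have : u k = v' k := by rw [hv'k, hδdef, hmin, hbdef]; ring
          have hkin : k ∈ Finset.univ.filter (fun i => u i ≠ v i) := by
            simp [(ne_of_lt hk).symm]
          have := hsub' hkin
          simp only [Finset.mem_filter, Finset.mem_univ, true_and] at this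
          exact this ‹u k = v' k›
    have hcard' : (Finset.univ.filter (fun i => u i ≠ v' i)).card ≤ N := by
      have := Finset.card_lt_card hsub
      omega
    obtain ⟨D', hD', hu'⟩ := ih u v' hcard' hu hv' hle' heq'
    refine ⟨D' * Tm, hD'.mul hTm, ?_⟩
    rw [hu', hTmv, Matrix.mulVec_mulVec]

theorem hlp {u v : Fin n → ℝ} (hu : Antitone u) (hv : Antitone v)
    (hle : ∀ k : ℕ, ps u k ≤ ps v k) (heq : ∑ i, u i = ∑ i, v i) :
    ∃ D, DStoch D ∧ u = D.mulVec v :=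
  hlp_aux _ u v le_rfl hu hv hle heq

end HLP

lemma ps_div {n : ℕ} (f : Fin n → ℝ) (c : ℝ) (l : ℕ) :
    ps (fun x => f x / c) l = ps f l / c := by
  unfold ps; rw [Finset.sum_div]

lemma ps_comb {n : ℕ} (f g : Fin n → ℝ) (a b : ℝ) (l : ℕ) :
    ps (fun x => a * f x + b * g x) l = a * ps f l + b * ps g l := by
  unfold ps; rw [Finset.mul_sum, Finset.mul_sum, ← Finset.sum_add_distrib]

lemma filter_le_eq {n : ℕ} (kf : Fin n) :
    Finset.univ.filter (fun x : Fin n => x ≤ kf)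
      = Finset.univ.filter (fun x : Fin n => (x:ℕ) < (kf:ℕ)+1) := by
  apply Finset.filter_congr
  intro x _
  rw [Fin.le_def]
  constructor <;> intro <;> omega

lemma mu_eq {n : ℕ} (P : Matrix (Fin n) (Fin 2) ℝ) (kf : Fin n) :
    muP P kf = ps (fun x => P x 0) ((kf:ℕ)+1) / ColSum P 0
      - ps (fun x => P x 1) ((kf:ℕ)+1) / ColSum P 1 := by
  unfold muP ps
  rw [filter_le_eq, Finset.sum_sub_distrib, Finset.sum_div, Finset.sum_div]

lemma nu_eq {n m : ℕ} (P : Matrix (Fin n) (Fin 2) ℝ) (Q : Matrix (Fin n) (Fin m) ℝ)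
    (w : Fin m) (kf : Fin n) :
    nuPQ P Q w kf = ps (fun x => Q x w) ((kf:ℕ)+1) / ColSum Q w
      - ps (fun x => P x 1) ((kf:ℕ)+1) / ColSum P 1 := by
  unfold nuPQ ps
  rw [filter_le_eq, Finset.sum_sub_distrib, Finset.sum_div, Finset.sum_div]

noncomputable def Hmax {n m : ℕ} (P : Matrix (Fin n) (Fin 2) ℝ) (Q : Matrix (Fin n) (Fin m) ℝ)
    (w : Fin m) : ℝ :=
  (insert (0 : ℝ) ((Finset.univ.filter fun k => 0 < muP P k).image
    fun k => nuPQ P Q w k / muP P k)).max' (Finset.insert_nonempty _ _)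

theorem stmt15 {n m : ℕ} (P : Matrix (Fin n) (Fin 2) ℝ) (Q : Matrix (Fin n) (Fin m) ℝ)
    (hP : JointProb P) (hQ : JointProb Q) (hPstd : StdForm P) (hQstd : StdForm Q)
    (hp0 : 0 < ColSum P 0) (hp1 : ColSum P 0 < 1)
    (hmaj2 : Majorizes (fun x => P x 0 / ColSum P 0) (fun x => P x 1 / ColSum P 1))
    (hmajw : ∀ w, Majorizes (fun x => P x 0 / ColSum P 0) (fun x => Q x w / ColSum Q w)) :
    CondMaj P Q ↔
      ∑ w, ColSum Q w *
        ((insert (0 : ℝ) ((Finset.univ.filter fun k => 0 < muP P k).image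
          fun k => nuPQ P Q w k / muP P k)).max' (Finset.insert_nonempty _ _)) ≤
        ColSum P 0 := by
  show CondMaj P Q ↔ ∑ w, ColSum Q w * Hmax P Q w ≤ ColSum P 0
  -- basic facts
  have hP1sum : ColSum P 0 + ColSum P 1 = 1 := by
    have h := hP.2
    have h2 : ∀ x : Fin n, ∑ y, P x y = P x 0 + P x 1 := fun x => Fin.sum_univ_two _
    rw [Finset.sum_congr rfl (fun x _ => h2 x), Finset.sum_add_distrib] at h
    exact h
  have hs2pos : 0 < ColSum P 1 := by linarith
  have hs2ne : ColSum P 1 ≠ 0 := ne_of_gt hs2pos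
  have hpne : ColSum P 0 ≠ 0 := ne_of_gt hp0
  rcases Nat.eq_zero_or_pos m with rfl | hm
  · exfalso
    have := hQ.2
    simp at this
  have hqpos : ∀ w, 0 < ColSum Q w := by
    intro w
    obtain ⟨x, hx⟩ := hQstd.2.1 w
    have hx' : 0 < Q x w := lt_of_le_of_ne (hQ.1 x w) (Ne.symm hx)
    have hle : Q x w ≤ ColSum Q w :=
      Finset.single_le_sum (fun i _ => hQ.1 i w) (Finset.mem_univ x)
    linarith
  have hqsum : ∑ w, ColSum Q w = 1 := by
    unfold ColSum
    rw [Finset.sum_comm]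
    exact hQ.2
  have hPanti : ∀ y : Fin 2, Antitone (fun x => P x y) := fun y x x' h => hPstd.1 y x x' h
  have hQanti : ∀ w, Antitone (fun x => Q x w) := fun w x x' h => hQstd.1 w x x' h
  have hp1c_anti : Antitone (fun x => P x 0 / ColSum P 0) :=
    fun x x' h => (div_le_div_iff_of_pos_right hp0).mpr (hPanti 0 h)
  have hp2c_anti : Antitone (fun x => P x 1 / ColSum P 1) :=
    fun x x' h => (div_le_div_iff_of_pos_right hs2pos).mpr (hPanti 1 h)
  have hqc_anti : ∀ w, Antitone (fun x => Q x w / ColSum Q w) :=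
    fun w x x' h => (div_le_div_iff_of_pos_right (hqpos w)).mpr (hQanti w h)
  have hps2 : ∀ l : ℕ, ps (fun x => P x 1 / ColSum P 1) l ≤ ps (fun x => P x 0 / ColSum P 0) l := by
    intro l
    have h := hmaj2.1 l
    rwa [pSumDesc_eq_ps hp2c_anti, pSumDesc_eq_ps hp1c_anti] at h
  have hpsw : ∀ w (l : ℕ),
      ps (fun x => Q x w / ColSum Q w) l ≤ ps (fun x => P x 0 / ColSum P 0) l := by
    intro w l
    have h := (hmajw w).1 l
    rwa [pSumDesc_eq_ps (hqc_anti w), pSumDesc_eq_ps hp1c_anti] at h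
  have hmu_nonneg : ∀ kf : Fin n, 0 ≤ muP P kf := by
    intro kf
    rw [mu_eq]
    have h := hps2 ((kf:ℕ)+1)
    rw [ps_div, ps_div] at h
    linarith
  have hnu_le_mu : ∀ w (kf : Fin n), nuPQ P Q w kf ≤ muP P kf := by
    intro w kf
    rw [nu_eq, mu_eq]
    have h := hpsw w ((kf:ℕ)+1)
    rw [ps_div, ps_div] at h
    linarith
  have hH0 : ∀ w, 0 ≤ Hmax P Q w :=
    fun w => Finset.le_max' _ 0 (Finset.mem_insert_self _ _)
  have hHge : ∀ w (kf : Fin n), 0 < muP P kf → nuPQ P Q w kf / muP P kf ≤ Hmax P Q w := by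
    intro w kf h
    apply Finset.le_max'
    apply Finset.mem_insert_of_mem
    exact Finset.mem_image_of_mem _ (Finset.mem_filter.mpr ⟨Finset.mem_univ _, h⟩)
  have hHmem : ∀ w, Hmax P Q w = 0 ∨
      ∃ kf : Fin n, 0 < muP P kf ∧ Hmax P Q w = nuPQ P Q w kf / muP P kf := by
    intro w
    have h := Finset.max'_mem _ (Finset.insert_nonempty (0:ℝ)
      ((Finset.univ.filter fun k => 0 < muP P k).image fun k => nuPQ P Q w k / muP P k))
    rcases Finset.mem_insert.mp h with h | h
    · exact Or.inl h
    · obtain ⟨kf, hkf, hval⟩ := Finset.mem_image.mp h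
      exact Or.inr ⟨kf, (Finset.mem_filter.mp hkf).2, hval.symm⟩
  have hH1 : ∀ w, Hmax P Q w ≤ 1 := by
    intro w
    apply Finset.max'_le
    intro y hy
    rcases Finset.mem_insert.mp hy with rfl | hy
    · norm_num
    · obtain ⟨kf, hkf, rfl⟩ := Finset.mem_image.mp hy
      have hmu := (Finset.mem_filter.mp hkf).2
      exact (div_le_one hmu).mpr (hnu_le_mu w kf)
  constructor
  · -- forward direction
    rintro ⟨J, D, R, hD, hR0, hRs, hQeq⟩
    set A : Fin m → ℝ := fun w => ∑ j, R j 0 w with hAdef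
    set B : Fin m → ℝ := fun w => ∑ j, R j 1 w with hBdef
    have hA0 : ∀ w, 0 ≤ A w := fun w => Finset.sum_nonneg fun j _ => hR0 j 0 w
    have hAsum : ∑ w, A w = 1 := by
      have h := hRs.2 0
      rw [← h]
      apply Finset.sum_congr rfl
      intro w _
      rw [Matrix.sum_apply]
    have hQentry : ∀ (x : Fin n) w, Q x w = ∑ j, (D j * (P * R j)) x w := by
      intro x w
      rw [hQeq, Matrix.sum_apply]
      exact Finset.sum_congr rfl fun j _ => by rw [Matrix.mul_assoc]
    have hzval : ∀ (j : Fin J) w (x : Fin n),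
        (P * R j) x w = R j 0 w * P x 0 + R j 1 w * P x 1 := by
      intro j w x
      rw [Matrix.mul_apply, Fin.sum_univ_two]
      ring
    have stepA : ∀ w (l : ℕ), ps (fun x => Q x w) l
        ≤ A w * ps (fun x => P x 0) l + B w * ps (fun x => P x 1) l := by
      intro w l
      have hQcolfun : (fun x => Q x w) = ∑ j, (fun x => (D j * (P * R j)) x w) := by
        funext x
        rw [Finset.sum_apply]
        exact hQentry x w
      calc ps (fun x => Q x w) l = pSumDesc (fun x => Q x w) l :=
            (pSumDesc_eq_ps (hQanti w) l).symm
        _ ≤ ∑ j, pSumDesc (fun x => (D j * (P * R j)) x w) l := by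
            rw [hQcolfun]
            exact pSumDesc_sum_le Finset.univ _ l
        _ ≤ ∑ j, pSumDesc (fun x' => (P * R j) x' w) l := by
            apply Finset.sum_le_sum
            intro j _
            have he : (fun x => (D j * (P * R j)) x w)
                = (D j).mulVec (fun x' => (P * R j) x' w) := by
              funext x
              rw [Matrix.mul_apply]
              rfl
            rw [he]
            exact pSumDesc_mulVec_le (hD j) _ l
        _ = ∑ j, ps (fun x' => (P * R j) x' w) l := by
            apply Finset.sum_congr rfl
            intro j _
            apply pSumDesc_eq_ps
            intro x x' hxx'
            show (P * R j) x' w ≤ (P * R j) x w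
            rw [hzval, hzval]
            have h0 := hPanti 0 hxx'
            have h1 := hPanti 1 hxx'
            simp only at h0 h1
            have hr0 := hR0 j 0 w
            have hr1 := hR0 j 1 w
            nlinarith
        _ = ∑ j, (R j 0 w * ps (fun x => P x 0) l + R j 1 w * ps (fun x => P x 1) l) := by
            apply Finset.sum_congr rfl
            intro j _
            rw [show (fun x' => (P * R j) x' w)
                = fun x' => R j 0 w * P x' 0 + R j 1 w * P x' 1 from
              funext fun x' => hzval j w x']
            exact ps_comb _ _ _ _ l
        _ = A w * ps (fun x => P x 0) l + B w * ps (fun x => P x 1) l := by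
            rw [Finset.sum_add_distrib, ← Finset.sum_mul, ← Finset.sum_mul]
    have hcolsum : ∀ w, ColSum Q w = A w * ColSum P 0 + B w * ColSum P 1 := by
      intro w
      unfold ColSum
      calc ∑ x, Q x w = ∑ x, ∑ j, (D j * (P * R j)) x w :=
            Finset.sum_congr rfl fun x _ => hQentry x w
        _ = ∑ j, ∑ x, (D j * (P * R j)) x w := Finset.sum_comm
        _ = ∑ j, ∑ y, (P * R j) y w := by
            apply Finset.sum_congr rfl
            intro j _
            calc ∑ x, (D j * (P * R j)) x w = ∑ x, ∑ y, D j x y * (P * R j) y w :=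
                  Finset.sum_congr rfl fun x _ => Matrix.mul_apply
              _ = ∑ y, (∑ x, D j x y) * (P * R j) y w := by
                  rw [Finset.sum_comm]
                  exact Finset.sum_congr rfl fun y _ => (Finset.sum_mul _ _ _).symm
              _ = ∑ y, (P * R j) y w := by
                  apply Finset.sum_congr rfl
                  intro y _
                  rw [(hD j).2.2 y, one_mul]
        _ = ∑ j, (R j 0 w * ColSum P 0 + R j 1 w * ColSum P 1) := by
            apply Finset.sum_congr rfl
            intro j _
            calc ∑ y, (P * R j) y w = ∑ y, (R j 0 w * P y 0 + R j 1 w * P y 1) :=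
                  Finset.sum_congr rfl fun y _ => hzval j w y
              _ = R j 0 w * ColSum P 0 + R j 1 w * ColSum P 1 := by
                  unfold ColSum
                  rw [Finset.sum_add_distrib, ← Finset.mul_sum, ← Finset.mul_sum]
        _ = A w * ColSum P 0 + B w * ColSum P 1 := by
            rw [Finset.sum_add_distrib, ← Finset.sum_mul, ← Finset.sum_mul]
    have hkey : ∀ w, ColSum Q w * Hmax P Q w ≤ ColSum P 0 * A w := by
      intro w
      rcases hHmem w with h0 | ⟨kf, hmu, hHeq⟩
      · rw [h0, mul_zero]
        exact mul_nonneg hp0.le (hA0 w)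
      · rw [hHeq, ← mul_div_assoc, div_le_iff₀ hmu]
        rw [nu_eq, mu_eq]
        have hAineq := stepA w ((kf:ℕ)+1)
        set X := ps (fun x => Q x w) ((kf:ℕ)+1) with hX
        set Y0 := ps (fun x => P x 0) ((kf:ℕ)+1) with hY0
        set Y1 := ps (fun x => P x 1) ((kf:ℕ)+1) with hY1
        have hq := hcolsum w
        have hqne : ColSum Q w ≠ 0 := ne_of_gt (hqpos w)
        have e1 : ColSum Q w * (X / ColSum Q w - Y1 / ColSum P 1)
            = X - ColSum Q w * Y1 / ColSum P 1 := by
          field_simp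
        have e2 : ColSum P 0 * A w * (Y0 / ColSum P 0 - Y1 / ColSum P 1)
            = A w * Y0 - ColSum P 0 * A w * Y1 / ColSum P 1 := by
          field_simp
        rw [e1, e2]
        have e3 : ColSum Q w * Y1 / ColSum P 1
            = ColSum P 0 * A w * Y1 / ColSum P 1 + B w * Y1 := by
          rw [hq]
          field_simp
        rw [e3]
        linarith
    calc ∑ w, ColSum Q w * Hmax P Q w ≤ ∑ w, ColSum P 0 * A w :=
          Finset.sum_le_sum fun w _ => hkey w
      _ = ColSum P 0 := by rw [← Finset.mul_sum, hAsum, mul_one]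
  · -- backward direction
    intro hineq
    set S := ∑ w, ColSum Q w * Hmax P Q w with hSdef
    have hS0 : 0 ≤ S :=
      Finset.sum_nonneg fun w _ => mul_nonneg (hqpos w).le (hH0 w)
    have hS1 : S < 1 := lt_of_le_of_lt hineq hp1
    set lam := (ColSum P 0 - S) / (1 - S) with hlamdef
    have hlam0 : 0 ≤ lam := div_nonneg (by linarith) (by linarith)
    have hlam1 : lam ≤ 1 := (div_le_one (by linarith)).mpr (by linarith)
    set t : Fin m → ℝ := fun w => Hmax P Q w + lam * (1 - Hmax P Q w) with htdef
    have htH : ∀ w, Hmax P Q w ≤ t w := by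
      intro w
      have h1 := hH1 w
      have h2 : 0 ≤ lam * (1 - Hmax P Q w) := mul_nonneg hlam0 (by linarith)
      simp only [htdef]
      linarith
    have ht0 : ∀ w, 0 ≤ t w := fun w => le_trans (hH0 w) (htH w)
    have ht1 : ∀ w, t w ≤ 1 := by
      intro w
      have h1 := hH1 w
      have h0 := hH0 w
      have h2 : t w - 1 = (Hmax P Q w - 1) * (1 - lam) := by simp only [htdef]; ring
      nlinarith
    have htsum : ∑ w, ColSum Q w * t w = ColSum P 0 := by
      have h1 : ∀ w : Fin m, ColSum Q w * t w
          = ColSum Q w * Hmax P Q w + lam * (ColSum Q w - ColSum Q w * Hmax P Q w) := by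
        intro w
        simp only [htdef]
        ring
      rw [Finset.sum_congr rfl fun w _ => h1 w, Finset.sum_add_distrib, ← Finset.mul_sum,
        Finset.sum_sub_distrib, hqsum, ← hSdef, hlamdef]
      rw [div_mul_cancel₀ _ (by linarith : (1:ℝ) - S ≠ 0)]
      ring
    set v : Fin m → Fin n → ℝ :=
      fun w x => t w * (P x 0 / ColSum P 0) + (1 - t w) * (P x 1 / ColSum P 1) with hvdef
    have hv_anti : ∀ w, Antitone (v w) := by
      intro w x x' hxx'
      simp only [hvdef]
      have h0 := hp1c_anti hxx'
      have h1 := hp2c_anti hxx'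
      simp only at h0 h1
      have ht0' := ht0 w
      have ht1' := ht1 w
      have m1 := mul_le_mul_of_nonneg_left h0 ht0'
      have m2 := mul_le_mul_of_nonneg_left h1 (by linarith : (0:ℝ) ≤ 1 - t w)
      linarith
    have hvps : ∀ w (l : ℕ), ps (v w) l
        = t w * ps (fun x => P x 0 / ColSum P 0) l
          + (1 - t w) * ps (fun x => P x 1 / ColSum P 1) l := by
      intro w l
      exact ps_comb _ _ _ _ l
    have key : ∀ w (l : ℕ),
        ps (fun x => Q x w / ColSum Q w) l - ps (fun x => P x 1 / ColSum P 1) l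
          ≤ t w * (ps (fun x => P x 0 / ColSum P 0) l
            - ps (fun x => P x 1 / ColSum P 1) l) := by
      intro w l
      rw [← ps_min (fun x => Q x w / ColSum Q w) l, ← ps_min (fun x => P x 0 / ColSum P 0) l,
        ← ps_min (fun x => P x 1 / ColSum P 1) l]
      rcases Nat.eq_zero_or_pos (min l n) with h0 | hpos
      · rw [h0]
        have hz : ∀ f : Fin n → ℝ, ps f 0 = 0 := by
          intro f
          unfold ps
          rw [Finset.filter_false_of_mem (by intro i _; omega), Finset.sum_empty]
        rw [hz, hz, hz]
        simp
      · have hkn : min l n ≤ n := min_le_right _ _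
        set kf : Fin n := ⟨min l n - 1, by omega⟩ with hkfdef
        have hmin : min l n = (kf:ℕ) + 1 := by
          simp only [hkfdef]
          omega
        rw [hmin]
        have hnu : ps (fun x => Q x w / ColSum Q w) ((kf:ℕ)+1)
            - ps (fun x => P x 1 / ColSum P 1) ((kf:ℕ)+1) = nuPQ P Q w kf := by
          rw [nu_eq, ps_div, ps_div]
        have hmu : ps (fun x => P x 0 / ColSum P 0) ((kf:ℕ)+1)
            - ps (fun x => P x 1 / ColSum P 1) ((kf:ℕ)+1) = muP P kf := by
          rw [mu_eq, ps_div, ps_div]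
        rw [hnu, hmu]
        rcases lt_or_eq_of_le (hmu_nonneg kf) with hmu' | hmu'
        · calc nuPQ P Q w kf
              ≤ Hmax P Q w * muP P kf := by
                rw [← div_le_iff₀ hmu']
                exact hHge w kf hmu'
            _ ≤ t w * muP P kf := mul_le_mul_of_nonneg_right (htH w) hmu'.le
        · rw [← hmu', mul_zero]
          have h3 := hnu_le_mu w kf
          linarith [hmu'.symm ▸ h3]
    have hmajle : ∀ w (l : ℕ), ps (fun x => Q x w / ColSum Q w) l ≤ ps (v w) l := by
      intro w l
      rw [hvps]
      linarith [key w l]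
    have hsum_qc : ∀ w, ∑ x, Q x w / ColSum Q w = 1 := by
      intro w
      rw [← Finset.sum_div]
      exact div_self (ne_of_gt (hqpos w))
    have hsum_p1c : ∑ x, P x 0 / ColSum P 0 = 1 := by
      rw [← Finset.sum_div]
      exact div_self hpne
    have hsum_p2c : ∑ x, P x 1 / ColSum P 1 = 1 := by
      rw [← Finset.sum_div]
      exact div_self hs2ne
    have hsum_v : ∀ w, ∑ x, v w x = 1 := by
      intro w
      simp only [hvdef]
      rw [Finset.sum_add_distrib, ← Finset.mul_sum, ← Finset.mul_sum, hsum_p1c, hsum_p2c]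
      ring
    have hDex : ∀ w, ∃ Dw, DStoch Dw ∧ (fun x => Q x w / ColSum Q w) = Dw.mulVec (v w) := by
      intro w
      apply hlp (hqc_anti w) (hv_anti w)
      · intro l
        exact hmajle w l
      · rw [hsum_qc, hsum_v]
    choose Dm hDm hDmv using hDex
    set Rm : Fin m → Matrix (Fin 2) (Fin m) ℝ := fun w => Matrix.of fun y w' =>
      if w' = w then (if y = 0 then ColSum Q w * t w / ColSum P 0
        else ColSum Q w * (1 - t w) / ColSum P 1) else 0 with hRmdef
    have hRm_nonneg : ∀ j y w', 0 ≤ Rm j y w' := by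
      intro j y w'
      simp only [hRmdef, Matrix.of_apply]
      split_ifs
      · exact div_nonneg (mul_nonneg (hqpos j).le (ht0 j)) hp0.le
      · refine div_nonneg (mul_nonneg (hqpos j).le ?_) hs2pos.le
        have := ht1 j
        linarith
      · exact le_rfl
    have hRmentry : ∀ (y : Fin 2) (w' : Fin m), (∑ j, Rm j) y w'
        = (if y = 0 then ColSum Q w' * t w' / ColSum P 0
            else ColSum Q w' * (1 - t w') / ColSum P 1) := by
      intro y w'
      rw [Matrix.sum_apply]
      rw [Finset.sum_eq_single w']
      · simp [hRmdef]
      · intro j _ hne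
        simp only [hRmdef, Matrix.of_apply]
        rw [if_neg (Ne.symm hne)]
      · intro h
        exact absurd (Finset.mem_univ w') h
    refine ⟨m, Dm, Rm, hDm, hRm_nonneg, ⟨?_, ?_⟩, ?_⟩
    · intro y w'
      rw [Matrix.sum_apply]
      exact Finset.sum_nonneg fun j _ => hRm_nonneg j y w'
    · intro y
      rw [Finset.sum_congr rfl fun w' _ => hRmentry y w']
      by_cases hy : y = 0
      · rw [Finset.sum_congr rfl fun w' _ => if_pos hy]
        rw [← Finset.sum_div, htsum]
        exact div_self hpne
      · rw [Finset.sum_congr rfl fun w' _ => if_neg hy]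
        rw [← Finset.sum_div]
        have h2 : ∑ w', ColSum Q w' * (1 - t w') = ColSum P 1 := by
          have h3 : ∀ w' : Fin m, ColSum Q w' * (1 - t w')
              = ColSum Q w' - ColSum Q w' * t w' := fun w' => by ring
          rw [Finset.sum_congr rfl fun w' _ => h3 w', Finset.sum_sub_distrib, hqsum, htsum]
          linarith
        rw [h2]
        exact div_self hs2ne
    · -- Q = ∑ w, Dm w * P * Rm w
      have hmain : ∀ (x : Fin n) (w' : Fin m), Q x w' = (∑ w, Dm w * P * Rm w) x w' := by
        intro x w'
        rw [Matrix.sum_apply]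
        rw [Finset.sum_eq_single w']
        · -- single term
          rw [Matrix.mul_apply, Fin.sum_univ_two]
          rw [show Rm w' 0 w' = ColSum Q w' * t w' / ColSum P 0 from by simp [hRmdef],
            show Rm w' 1 w' = ColSum Q w' * (1 - t w') / ColSum P 1 from by simp [hRmdef]]
          have hx : Q x w' = ((Dm w').mulVec (v w') x) * ColSum Q w' := by
            have h4 := congrFun (hDmv w') x
            have h4 : Q x w' / ColSum Q w' = (Dm w').mulVec (v w') x := h4
            exact (div_eq_iff (ne_of_gt (hqpos w'))).mp h4
          have hmv : ((Dm w').mulVec (v w')) x = ∑ z, Dm w' x z * v w' z := rfl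
          have hm0 : (Dm w' * P) x 0 = ∑ z, Dm w' x z * P z 0 := Matrix.mul_apply
          have hm1 : (Dm w' * P) x 1 = ∑ z, Dm w' x z * P z 1 := Matrix.mul_apply
          have hveq : ∑ z, Dm w' x z * v w' z
              = (t w' / ColSum P 0) * ∑ z, Dm w' x z * P z 0
                + ((1 - t w') / ColSum P 1) * ∑ z, Dm w' x z * P z 1 := by
            rw [Finset.mul_sum, Finset.mul_sum, ← Finset.sum_add_distrib]
            apply Finset.sum_congr rfl
            intro z _
            simp only [hvdef]
            ring
          rw [hx, hmv, hveq, hm0, hm1]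
          ring
        · intro j _ hne
          rw [Matrix.mul_apply]
          apply Finset.sum_eq_zero
          intro y _
          simp only [hRmdef, Matrix.of_apply]
          rw [if_neg (Ne.symm hne), mul_zero]
        · intro h
          exact absurd (Finset.mem_univ w') h
      exact Matrix.ext hmain
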